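/- Let C be a nonempty weak* compact convex subset of a dual Banach space and let S, T : C → C be two commuting weak*-continuous nonexpansive maps. Then S and T have a common fixed point: there exists x ∈ C with Sx = x and Tx = x. -/

import Mathlib

open Filter Topology Set

section Stmt17Aux

variable {E : Type*} [NormedAddCommGroup E] [NormedSpace ℝ E]

/-- Finite "box" neighborhoods form a basis of the weak-* topology. -/
private theorem stmt17_nw_box (u : WeakDual ℝ E) (V : Set (WeakDual ℝ E)) (hV : V ∈ 𝓝 u) :
    ∃ (I : Finset E) (δ : ℝ), 0 < δ ∧
      {y : WeakDual ℝ E | ∀ e ∈ I, |y e - u e| < δ} ⊆ V := by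
  rw [show 𝓝 u = Filter.comap (fun (x : WeakDual ℝ E) => (x : E → ℝ)) (𝓝 (u : E → ℝ)) from
    nhds_induced _ _, Filter.mem_comap] at hV
  obtain ⟨W, hW, hWV⟩ := hV
  rw [nhds_pi, Filter.mem_pi'] at hW
  obtain ⟨I, t, ht, htW⟩ := hW
  have : ∀ e ∈ I, ∃ δ > 0, Metric.ball ((u : E → ℝ) e) δ ⊆ t e := by
    intro e _
    exact Metric.mem_nhds_iff.mp (ht e)
  choose! δf hδf hball using this
  rcases I.eq_empty_or_nonempty with hI | hI
  · refine ⟨I, 1, one_pos, fun y _ => hWV ?_⟩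
    apply htW
    intro e he
    simp [hI] at he
  · refine ⟨I, I.inf' hI δf, ?_, fun y hy => hWV ?_⟩
    · obtain ⟨e, he, hee⟩ := I.exists_mem_eq_inf' hI δf
      rw [hee]; exact hδf e he
    · apply htW
      intro e he
      apply hball e he
      rw [Metric.mem_ball, Real.dist_eq]
      exact lt_of_lt_of_le (hy e he) (I.inf'_le _ he)

/-- The dual norm is weak-* lower semicontinuous: sublevel sets are weak-* closed. -/
private theorem stmt17_nw_sublevel_closed (c : ℝ) :
    IsClosed {y : WeakDual ℝ E | ‖WeakDual.toStrongDual y‖ ≤ c} := by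
  have h := WeakDual.isClosed_closedBall (0 : StrongDual ℝ E) c
  convert h using 1
  ext y
  simp [Metric.mem_closedBall, dist_eq_norm]

private theorem stmt17_pair_closed (c : ℝ) :
    IsClosed {p : (WeakDual ℝ E) × (WeakDual ℝ E) |
      ‖WeakDual.toStrongDual (p.1 - p.2)‖ ≤ c} :=
  (stmt17_nw_sublevel_closed c).preimage (continuous_fst.sub continuous_snd)

/-- A weak-* compact convex set in the dual of a normed space is norm-bounded.
(Baire category on the compact Hausdorff space `C` itself.) -/
private theorem stmt17_bounded (C : Set (WeakDual ℝ E)) (hne : C.Nonempty)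
    (hcomp : IsCompact C) (hconv : Convex ℝ C) :
    ∃ D : ℝ, 0 ≤ D ∧ ∀ y ∈ C, ∀ z ∈ C,
      ‖WeakDual.toStrongDual (y - z)‖ ≤ D := by
  classical
  have hcs : CompactSpace ↥C := isCompact_iff_compactSpace.mp hcomp
  have hnes : Nonempty ↥C := hne.to_subtype
  have hAc : ∀ n : ℕ, IsClosed {k : ↥C | ‖WeakDual.toStrongDual (k : WeakDual ℝ E)‖ ≤ n} := by
    intro n
    exact (stmt17_nw_sublevel_closed (n : ℝ)).preimage continuous_subtype_val
  have hAu : (⋃ n : ℕ, {k : ↥C | ‖WeakDual.toStrongDual (k : WeakDual ℝ E)‖ ≤ n}) = univ := by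
    apply eq_univ_iff_forall.mpr
    intro k
    obtain ⟨n, hn⟩ := exists_nat_ge ‖WeakDual.toStrongDual (k : WeakDual ℝ E)‖
    exact mem_iUnion.mpr ⟨n, hn⟩
  obtain ⟨n, hn⟩ := nonempty_interior_of_iUnion_of_closed hAc hAu
  obtain ⟨u0', hu0'⟩ := hn
  have hmem : {k : ↥C | ‖WeakDual.toStrongDual (k : WeakDual ℝ E)‖ ≤ n} ∈ 𝓝 u0' :=
    mem_interior_iff_mem_nhds.mp hu0'
  rw [nhds_subtype, Filter.mem_comap] at hmem
  obtain ⟨V, hV, hVA⟩ := hmem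
  have hu0C : (u0' : WeakDual ℝ E) ∈ C := u0'.2
  have hVn : ∀ y, y ∈ C → y ∈ V → ‖WeakDual.toStrongDual y‖ ≤ n := by
    intro y hy hyV
    have h := hVA (a := ⟨y, hy⟩) hyV
    exact h
  obtain ⟨I, δ, hδ, hbox⟩ := stmt17_nw_box (u0' : WeakDual ℝ E) V hV
  have hMe : ∀ e ∈ I, ∃ M : ℝ, 0 ≤ M ∧ ∀ y ∈ C, |y e - (u0' : WeakDual ℝ E) e| ≤ M := by
    intro e _
    have hcont : ContinuousOn (fun y : WeakDual ℝ E => |y e - (u0' : WeakDual ℝ E) e|) C := by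
      apply Continuous.continuousOn
      exact ((WeakDual.eval_continuous e).sub continuous_const).abs
    obtain ⟨ymax, _, hge⟩ := hcomp.exists_isMaxOn hne hcont
    exact ⟨|ymax e - (u0' : WeakDual ℝ E) e|, abs_nonneg _, fun y hy => hge hy⟩
  choose! Mf hMf0 hMf using hMe
  rcases I.eq_empty_or_nonempty with hI | hI
  · have hCn : ∀ y ∈ C, ‖WeakDual.toStrongDual y‖ ≤ n := by
      intro y hy
      apply hVn y hy
      apply hbox
      intro e he
      rw [hI] at he
      simp at he
    refine ⟨2 * n, by positivity, fun y hy z hz => ?_⟩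
    calc ‖WeakDual.toStrongDual (y - z)‖
        ≤ ‖WeakDual.toStrongDual y‖ + ‖WeakDual.toStrongDual z‖ := by
          rw [map_sub]; exact norm_sub_le _ _
      _ ≤ 2 * n := by have := hCn y hy; have := hCn z hz; linarith
  · obtain ⟨lam, hlam0, hlam1, hlamMf⟩ :
        ∃ lam : ℝ, 0 < lam ∧ lam ≤ 1 ∧ ∀ e ∈ I, lam * Mf e < δ := by
      have hMM0 : 0 ≤ I.sup' hI Mf := by
        obtain ⟨e, he⟩ := hI
        exact le_trans (hMf0 e he) (Finset.le_sup' Mf he)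
      refine ⟨δ / (2 * (I.sup' hI Mf + δ)), by positivity, ?_, ?_⟩
      · rw [div_le_one (by positivity)]
        nlinarith
      · intro e he
        have hle : Mf e ≤ I.sup' hI Mf := Finset.le_sup' Mf he
        have hMf0e := hMf0 e he
        rw [div_mul_eq_mul_div, div_lt_iff₀ (by positivity)]
        nlinarith
    have key : ∀ x ∈ C, ‖WeakDual.toStrongDual (x - (u0' : WeakDual ℝ E))‖
        ≤ (n + ‖WeakDual.toStrongDual (u0' : WeakDual ℝ E)‖) / lam := by
      intro x hx
      have hyxC : ((1 - lam) • (u0' : WeakDual ℝ E) + lam • x) ∈ C :=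
        hconv hu0C hx (by linarith) (le_of_lt hlam0) (by ring)
      have hyxbox : ∀ e ∈ I, |((1 - lam) • (u0' : WeakDual ℝ E) + lam • x) e
          - (u0' : WeakDual ℝ E) e| < δ := by
        intro e he
        have heval : ((1 - lam) • (u0' : WeakDual ℝ E) + lam • x) e
            - (u0' : WeakDual ℝ E) e = lam * (x e - (u0' : WeakDual ℝ E) e) := by
          have h1 : ((1 - lam) • (u0' : WeakDual ℝ E) + lam • x) e
              = (1 - lam) * ((u0' : WeakDual ℝ E) e) + lam * (x e) := rfl
          rw [h1]; ring
        rw [heval, abs_mul, abs_of_pos hlam0]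
        calc lam * |x e - (u0' : WeakDual ℝ E) e| ≤ lam * Mf e := by
              have := hMf e he x hx
              nlinarith
          _ < δ := hlamMf e he
      have hyxn : ‖WeakDual.toStrongDual ((1 - lam) • (u0' : WeakDual ℝ E) + lam • x)‖ ≤ n :=
        hVn _ hyxC (hbox hyxbox)
      have hsub : ((1 - lam) • (u0' : WeakDual ℝ E) + lam • x) - (u0' : WeakDual ℝ E)
          = lam • (x - (u0' : WeakDual ℝ E)) := by
        module
      have hnorm1 : ‖WeakDual.toStrongDual (((1 - lam) • (u0' : WeakDual ℝ E) + lam • x)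
          - (u0' : WeakDual ℝ E))‖
          = lam * ‖WeakDual.toStrongDual (x - (u0' : WeakDual ℝ E))‖ := by
        rw [hsub, map_smul, norm_smul, Real.norm_eq_abs, abs_of_pos hlam0]
      have hnorm2 : ‖WeakDual.toStrongDual (((1 - lam) • (u0' : WeakDual ℝ E) + lam • x)
          - (u0' : WeakDual ℝ E))‖ ≤ n + ‖WeakDual.toStrongDual (u0' : WeakDual ℝ E)‖ := by
        rw [map_sub]
        calc ‖WeakDual.toStrongDual ((1 - lam) • (u0' : WeakDual ℝ E) + lam • x)
              - WeakDual.toStrongDual (u0' : WeakDual ℝ E)‖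
            ≤ ‖WeakDual.toStrongDual ((1 - lam) • (u0' : WeakDual ℝ E) + lam • x)‖
              + ‖WeakDual.toStrongDual (u0' : WeakDual ℝ E)‖ := norm_sub_le _ _
          _ ≤ n + ‖WeakDual.toStrongDual (u0' : WeakDual ℝ E)‖ := by linarith
      rw [le_div_iff₀ hlam0]
      rw [hnorm1] at hnorm2
      linarith [hnorm2]
    have hR0 : 0 ≤ (n + ‖WeakDual.toStrongDual (u0' : WeakDual ℝ E)‖) / lam := by
      have h1 := key _ hu0C
      have h0 : (0:ℝ)
          ≤ ‖WeakDual.toStrongDual ((u0' : WeakDual ℝ E) - (u0' : WeakDual ℝ E))‖ :=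
        norm_nonneg _
      linarith
    refine ⟨2 * ((n + ‖WeakDual.toStrongDual (u0' : WeakDual ℝ E)‖) / lam), by linarith,
      fun y hy z hz => ?_⟩
    have h1 := key y hy
    have h2 := key z hz
    have hyz : y - z = (y - (u0' : WeakDual ℝ E)) - (z - (u0' : WeakDual ℝ E)) := by abel
    calc ‖WeakDual.toStrongDual (y - z)‖
        = ‖WeakDual.toStrongDual ((y - (u0' : WeakDual ℝ E))
            - (z - (u0' : WeakDual ℝ E)))‖ := by rw [hyz]
      _ ≤ ‖WeakDual.toStrongDual (y - (u0' : WeakDual ℝ E))‖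
          + ‖WeakDual.toStrongDual (z - (u0' : WeakDual ℝ E))‖ := by
          rw [map_sub]; exact norm_sub_le _ _
      _ ≤ 2 * ((n + ‖WeakDual.toStrongDual (u0' : WeakDual ℝ E)‖) / lam) := by linarith

/-- Banach fixed point theorem on a weak-* closed subset of the dual,
for a map which is a `t`-contraction in the dual norm. -/
private theorem stmt17_banach_on (C : Set (WeakDual ℝ E)) (hC : IsClosed C)
    (g : WeakDual ℝ E → WeakDual ℝ E) (hmap : Set.MapsTo g C C) (t : ℝ)
    (ht0 : 0 ≤ t) (ht1 : t < 1)
    (hg : ∀ a ∈ C, ∀ b ∈ C,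
      ‖WeakDual.toStrongDual (g a - g b)‖ ≤ t * ‖WeakDual.toStrongDual (a - b)‖)
    (x : WeakDual ℝ E) (hx : x ∈ C) : ∃ y ∈ C, g y = y := by
  classical
  set sD : Set (StrongDual ℝ E) := (fun y => StrongDual.toWeakDual y) ⁻¹' C with hsD
  have hsDc : IsClosed sD := hC.preimage NormedSpace.Dual.toWeakDual_continuous
  set gD : StrongDual ℝ E → StrongDual ℝ E :=
    fun y => WeakDual.toStrongDual (g (StrongDual.toWeakDual y)) with hgD
  have hmapD : Set.MapsTo gD sD sD := by
    intro a ha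
    simp only [hsD, Set.mem_preimage, hgD] at ha ⊢
    exact hmap ha
  have hgD' : ∀ a ∈ sD, ∀ b ∈ sD, dist (gD a) (gD b) ≤ t * dist a b := by
    intro a ha b hb
    have h1 : dist (gD a) (gD b)
        = ‖WeakDual.toStrongDual (g (StrongDual.toWeakDual a)
            - g (StrongDual.toWeakDual b))‖ := by
      rw [dist_eq_norm, hgD]; rw [← map_sub]
    have h2 : dist a b = ‖WeakDual.toStrongDual
        ((StrongDual.toWeakDual a) - (StrongDual.toWeakDual b))‖ := by
      rw [dist_eq_norm, ← map_sub]; simp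
    rw [h1, h2]
    exact hg _ ha _ hb
  have hsc : IsComplete sD := hsDc.isComplete
  have hK : (⟨t, ht0⟩ : NNReal) < 1 := by exact_mod_cast ht1
  have hlip : LipschitzWith ⟨t, ht0⟩ (hmapD.restrict gD sD sD) := by
    apply LipschitzWith.of_dist_le_mul
    intro a b
    rw [Subtype.dist_eq]
    exact hgD' a a.2 b b.2
  have hcontr : ContractingWith ⟨t, ht0⟩ (hmapD.restrict gD sD sD) := ⟨hK, hlip⟩
  have hxD : WeakDual.toStrongDual x ∈ sD := by simp [hsD, hx]
  have hed : edist (WeakDual.toStrongDual x) (gD (WeakDual.toStrongDual x)) ≠ ⊤ :=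
    edist_ne_top _ _
  refine ⟨StrongDual.toWeakDual
    (ContractingWith.efixedPoint' gD hsc hmapD hcontr _ hxD hed), ?_, ?_⟩
  · exact ContractingWith.efixedPoint_mem' hsc hmapD hcontr hxD hed
  · have := ContractingWith.efixedPoint_isFixedPt' hsc hmapD hcontr hxD hed
    unfold Function.IsFixedPt at this
    have h2 := congrArg (fun z => StrongDual.toWeakDual z) this
    simpa [hgD] using h2

/-- If `u → z` along an ultrafilter refining `atTop` and `v` is norm-asymptotic to `u`,
then `v → z` (in the weak-* topology). -/
private theorem stmt17_tendsto_of_close (U : Ultrafilter ℕ) (hU : (U : Filter ℕ) ≤ atTop)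
    (u v : ℕ → WeakDual ℝ E) (z : WeakDual ℝ E) (hu : Tendsto u (U : Filter ℕ) (𝓝 z))
    (b : ℕ → ℝ) (hb : Tendsto b atTop (𝓝 0))
    (hle : ∀ n, ‖WeakDual.toStrongDual (v n - u n)‖ ≤ b n) :
    Tendsto v (U : Filter ℕ) (𝓝 z) := by
  have hdiff : Tendsto (fun n => v n - u n) (U : Filter ℕ) (𝓝 0) := by
    rw [tendsto_iff_forall_eval_tendsto_topDualPairing]
    intro e
    have h0 : topDualPairing ℝ E (0 : WeakDual ℝ E) e = 0 := by
      rfl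
    rw [h0]
    have hbU : Tendsto (fun n => b n * ‖e‖) (U : Filter ℕ) (𝓝 0) := by
      have := (hb.mono_left hU).mul_const ‖e‖
      simpa using this
    apply squeeze_zero_norm _ hbU
    intro n
    calc ‖topDualPairing ℝ E (v n - u n) e‖
        = ‖(v n - u n) e‖ := rfl
      _ ≤ ‖WeakDual.toStrongDual (v n - u n)‖ * ‖e‖ :=
          (WeakDual.toStrongDual (v n - u n)).le_opNorm e
      _ ≤ b n * ‖e‖ :=
          mul_le_mul_of_nonneg_right (hle n) (norm_nonneg _)
  have hsum : Tendsto (fun n => u n + (v n - u n)) (U : Filter ℕ) (𝓝 (z + 0)) :=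
    hu.add hdiff
  simpa using hsum

end Stmt17Aux

set_option maxHeartbeats 1000000 in
/-- Two commuting weak*-continuous nonexpansive self-maps of a
nonempty weak* compact convex set `C` have a common fixed point. -/
theorem stmt17 {E : Type*} [NormedAddCommGroup E] [NormedSpace ℝ E]
    (C : Set (WeakDual ℝ E)) (hne : C.Nonempty) (hcomp : IsCompact C) (hconv : Convex ℝ C)
    (S T : WeakDual ℝ E → WeakDual ℝ E)
    (hSmaps : Set.MapsTo S C C) (hTmaps : Set.MapsTo T C C)
    (hSc : ContinuousOn S C) (hTc : ContinuousOn T C)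
    (hSne : ∀ y ∈ C, ∀ z ∈ C,
      ‖WeakDual.toStrongDual (S y - S z)‖ ≤ ‖WeakDual.toStrongDual (y - z)‖)
    (hTne : ∀ y ∈ C, ∀ z ∈ C,
      ‖WeakDual.toStrongDual (T y - T z)‖ ≤ ‖WeakDual.toStrongDual (y - z)‖)
    (hcomm : ∀ x ∈ C, S (T x) = T (S x)) :
    ∃ x ∈ C, S x = x ∧ T x = x := by
  classical
  obtain ⟨x₀, hx₀⟩ := hne
  obtain ⟨D, hD0, hD⟩ := stmt17_bounded C ⟨x₀, hx₀⟩ hcomp hconv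
  have hCcl : IsClosed C := hcomp.isClosed
  obtain ⟨U, hU⟩ : ∃ U : Ultrafilter ℕ, (U : Filter ℕ) ≤ atTop :=
    ⟨Ultrafilter.of atTop, Ultrafilter.of_le _⟩
  -- the parameters tₙ = 1 - 1/(n+1)
  have ht0 : ∀ n : ℕ, (0:ℝ) ≤ 1 - 1/((n:ℝ)+1) := by
    intro n
    have h1 : (1:ℝ)/((n:ℝ)+1) ≤ 1 := by
      rw [div_le_one (by positivity)]
      simp
    linarith
  have ht1 : ∀ n : ℕ, 1 - 1/((n:ℝ)+1) < 1 := by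
    intro n
    have : (0:ℝ) < 1/((n:ℝ)+1) := by positivity
    linarith
  have hbto : Tendsto (fun n : ℕ => (1/((n:ℝ)+1)) * D) atTop (𝓝 0) := by
    have := tendsto_one_div_add_atTop_nhds_zero_nat.mul_const D
    simpa using this
  -- ultrafilter limits inside a compact set
  have hulim : ∀ (K : Set (WeakDual ℝ E)), IsCompact K → ∀ w : ℕ → WeakDual ℝ E,
      (∀ n, w n ∈ K) → ∃ z ∈ K, Tendsto w (U : Filter ℕ) (𝓝 z) := by
    intro K hK w hw
    have h : (U.map w : Filter (WeakDual ℝ E)) ≤ Filter.principal K := by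
      rw [Ultrafilter.coe_map, Filter.le_principal_iff]
      exact Filter.mem_map.mpr (by filter_upwards using hw)
    obtain ⟨z, hz, hle⟩ := hK.ultrafilter_le_nhds (U.map w) h
    exact ⟨z, hz, hle⟩
  -- Step 1: resolvents J t x for the map S
  have hres : ∀ t : ℝ, 0 ≤ t → t < 1 → ∀ x, x ∈ C →
      ∃ y ∈ C, (1 - t) • x + t • S y = y := by
    intro t h0 h1 x hx
    apply stmt17_banach_on C hCcl (fun y => (1 - t) • x + t • S y) ?_ t h0 h1 ?_ x hx
    · intro y hy
      exact hconv hx (hSmaps hy) (by linarith) h0 (by ring)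
    · intro a ha b hb
      have hsub : ((1 - t) • x + t • S a) - ((1 - t) • x + t • S b) = t • (S a - S b) := by
        module
      rw [hsub, map_smul, norm_smul, Real.norm_eq_abs, abs_of_nonneg h0]
      exact mul_le_mul_of_nonneg_left (hSne a ha b hb) h0
  choose! J hJC hJeq using hres
  -- displacement of the resolvents under S
  have hJdisp : ∀ t : ℝ, 0 ≤ t → t < 1 → ∀ x, x ∈ C →
      ‖WeakDual.toStrongDual (S (J t x) - J t x)‖ ≤ (1 - t) * D := by
    intro t h0 h1 x hx
    have h := hJeq t h0 h1 x hx
    obtain ⟨s, hs⟩ : ∃ s, s = S (J t x) := ⟨_, rfl⟩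
    rw [← hs] at h
    have hsub : s - J t x = (1 - t) • (s - x) := by
      rw [← h]
      module
    have hb := hD _ (hSmaps (hJC t h0 h1 x hx)) x hx
    rw [← hs] at hb ⊢
    rw [hsub, map_smul, norm_smul, Real.norm_eq_abs, abs_of_nonneg (by linarith)]
    exact mul_le_mul_of_nonneg_left hb (by linarith)
  -- the resolvents are nonexpansive
  have hJne : ∀ t : ℝ, 0 ≤ t → t < 1 → ∀ x, x ∈ C → ∀ y, y ∈ C →
      ‖WeakDual.toStrongDual (J t x - J t y)‖ ≤ ‖WeakDual.toStrongDual (x - y)‖ := by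
    intro t h0 h1 x hx y hy
    have hx' := hJeq t h0 h1 x hx
    have hy' := hJeq t h0 h1 y hy
    obtain ⟨sx, hsx⟩ : ∃ s, s = S (J t x) := ⟨_, rfl⟩
    obtain ⟨sy, hsy⟩ : ∃ s, s = S (J t y) := ⟨_, rfl⟩
    rw [← hsx] at hx'
    rw [← hsy] at hy'
    have hsub : J t x - J t y = (1 - t) • (x - y) + t • (sx - sy) := by
      rw [← hx', ← hy']
      module
    have htri : ‖WeakDual.toStrongDual (J t x - J t y)‖
        ≤ (1 - t) * ‖WeakDual.toStrongDual (x - y)‖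
          + t * ‖WeakDual.toStrongDual (sx - sy)‖ := by
      rw [hsub, map_add, map_smul, map_smul]
      calc ‖(1 - t) • WeakDual.toStrongDual (x - y)
            + t • WeakDual.toStrongDual (sx - sy)‖
          ≤ ‖(1 - t) • WeakDual.toStrongDual (x - y)‖
            + ‖t • WeakDual.toStrongDual (sx - sy)‖ := norm_add_le _ _
        _ = (1 - t) * ‖WeakDual.toStrongDual (x - y)‖
            + t * ‖WeakDual.toStrongDual (sx - sy)‖ := by
            rw [norm_smul, norm_smul, Real.norm_eq_abs, Real.norm_eq_abs,
              abs_of_nonneg (by linarith : (0:ℝ) ≤ 1 - t), abs_of_nonneg h0]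
    have hSJ := hSne (J t x) (hJC t h0 h1 x hx) (J t y) (hJC t h0 h1 y hy)
    rw [← hsx, ← hsy] at hSJ
    obtain ⟨A, hA⟩ : ∃ A, A = ‖WeakDual.toStrongDual (J t x - J t y)‖ := ⟨_, rfl⟩
    obtain ⟨B, hB⟩ : ∃ B, B = ‖WeakDual.toStrongDual (sx - sy)‖ := ⟨_, rfl⟩
    obtain ⟨c, hc⟩ : ∃ c, c = ‖WeakDual.toStrongDual (x - y)‖ := ⟨_, rfl⟩
    rw [← hA, ← hB, ← hc] at htri
    rw [← hA, ← hB] at hSJ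
    rw [← hA, ← hc]
    have h3 : t * B ≤ t * A := mul_le_mul_of_nonneg_left hSJ h0
    clear hsub hx' hy' hsx hsy hA hB hc hSJ
    have h5 : (0:ℝ) < 1 - t := by linarith
    have h4 : (1 - t) * A ≤ (1 - t) * c := by nlinarith
    exact le_of_mul_le_mul_left h4 h5
  -- the resolvents fix fixed points of S
  have hJid : ∀ t : ℝ, 0 ≤ t → t < 1 → ∀ x, x ∈ C → S x = x → J t x = x := by
    intro t h0 h1 x hx hSx
    have h := hJeq t h0 h1 x hx
    obtain ⟨s, hs⟩ : ∃ s, s = S (J t x) := ⟨_, rfl⟩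
    rw [← hs] at h
    have hsub : J t x - x = t • (s - S x) := by
      rw [hSx, ← h]
      module
    have hnorm : ‖WeakDual.toStrongDual (J t x - x)‖
        ≤ t * ‖WeakDual.toStrongDual (J t x - x)‖ := by
      calc ‖WeakDual.toStrongDual (J t x - x)‖
          = t * ‖WeakDual.toStrongDual (s - S x)‖ := by
            rw [hsub, map_smul, norm_smul, Real.norm_eq_abs, abs_of_nonneg h0]
        _ ≤ t * ‖WeakDual.toStrongDual (J t x - x)‖ := by
            have h2 := hSne (J t x) (hJC t h0 h1 x hx) x hx
            rw [← hs] at h2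
            exact mul_le_mul_of_nonneg_left h2 h0
    obtain ⟨A, hA⟩ : ∃ A, A = ‖WeakDual.toStrongDual (J t x - x)‖ := ⟨_, rfl⟩
    rw [← hA] at hnorm
    have hnn : (0:ℝ) ≤ A := hA ▸ norm_nonneg _
    clear hsub hs h
    have hA0 : A = 0 := by nlinarith
    rw [hA] at hA0
    rw [norm_eq_zero] at hA0
    have h9 : J t x - x = 0 := by exact_mod_cast hA0
    exact sub_eq_zero.mp h9
  -- the resolvent sequence
  have hseq0 : ∀ n : ℕ, (0:ℝ) ≤ 1 - 1/((n:ℝ)+1) := ht0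
  have hseq1 : ∀ n : ℕ, 1 - 1/((n:ℝ)+1) < 1 := ht1
  have hseqc : ∀ n : ℕ, 1 - (1 - 1/((n:ℝ)+1)) = 1/((n:ℝ)+1) := fun n => by ring
  -- Step 2: the retraction r onto the fixed point set of S
  have hrex : ∀ x, x ∈ C → ∃ z ∈ C,
      Tendsto (fun n : ℕ => J (1 - 1/((n:ℝ)+1)) x) (U : Filter ℕ) (𝓝 z) := by
    intro x hx
    exact hulim C hcomp _ (fun n => hJC _ (hseq0 n) (hseq1 n) x hx)
  choose! r hrC hrT using hrex
  have hrfix : ∀ x ∈ C, S (r x) = r x := by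
    intro x hx
    have hzC : r x ∈ C := hrC x hx
    have hT1 : Tendsto (fun n : ℕ => J (1 - 1/((n:ℝ)+1)) x) (U : Filter ℕ) (𝓝 (r x)) :=
      hrT x hx
    have hT2 : Tendsto (fun n : ℕ => S (J (1 - 1/((n:ℝ)+1)) x)) (U : Filter ℕ)
        (𝓝 (S (r x))) := by
      have hcw : ContinuousWithinAt S C (r x) := hSc (r x) hzC
      apply hcw.tendsto.comp
      rw [nhdsWithin, tendsto_inf]
      refine ⟨hT1, ?_⟩
      rw [tendsto_principal]
      filter_upwards using fun n => hJC _ (hseq0 n) (hseq1 n) x hx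
    have hT3 : Tendsto (fun n : ℕ => S (J (1 - 1/((n:ℝ)+1)) x)) (U : Filter ℕ)
        (𝓝 (r x)) := by
      apply stmt17_tendsto_of_close U hU (fun n : ℕ => J (1 - 1/((n:ℝ)+1)) x) _ _ hT1
        (fun n => (1/((n:ℝ)+1)) * D) hbto
      intro n
      have := hJdisp _ (hseq0 n) (hseq1 n) x hx
      rw [hseqc n] at this
      exact this
    exact tendsto_nhds_unique hT2 hT3
  have hrne : ∀ x ∈ C, ∀ y ∈ C,
      ‖WeakDual.toStrongDual (r x - r y)‖ ≤ ‖WeakDual.toStrongDual (x - y)‖ := by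
    intro x hx y hy
    have hT1 : Tendsto (fun n : ℕ => (J (1 - 1/((n:ℝ)+1)) x, J (1 - 1/((n:ℝ)+1)) y))
        (U : Filter ℕ) (𝓝 (r x, r y)) :=
      (hrT x hx).prodMk_nhds (hrT y hy)
    have hcl := stmt17_pair_closed (E := E) ‖WeakDual.toStrongDual (x - y)‖
    have hmem : (r x, r y) ∈ {p : (WeakDual ℝ E) × (WeakDual ℝ E) |
        ‖WeakDual.toStrongDual (p.1 - p.2)‖ ≤ ‖WeakDual.toStrongDual (x - y)‖} := by
      apply hcl.mem_of_tendsto hT1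
      filter_upwards using fun n => hJne _ (hseq0 n) (hseq1 n) x hx y hy
    exact hmem
  have hrid : ∀ x ∈ C, S x = x → r x = x := by
    intro x hx hSx
    have hconst : Tendsto (fun n : ℕ => J (1 - 1/((n:ℝ)+1)) x) (U : Filter ℕ) (𝓝 x) := by
      have heq : (fun n : ℕ => J (1 - 1/((n:ℝ)+1)) x) = fun _ => x :=
        funext fun n => hJid _ (hseq0 n) (hseq1 n) x hx hSx
      rw [heq]
      exact tendsto_const_nhds
    exact tendsto_nhds_unique (hrT x hx) hconst
  -- Step 3: the fixed point set F of S
  have hFcomp : IsCompact {y | y ∈ C ∧ S y = y} := by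
    have hrestr : Continuous (fun k : ↥C => S (k : WeakDual ℝ E)) :=
      hSc.restrict
    have hclK : IsClosed {k : ↥C | S (k : WeakDual ℝ E) = (k : WeakDual ℝ E)} :=
      isClosed_eq hrestr continuous_subtype_val
    have hcs : CompactSpace ↥C := isCompact_iff_compactSpace.mp hcomp
    have hKcomp : IsCompact {k : ↥C | S (k : WeakDual ℝ E) = (k : WeakDual ℝ E)} :=
      hclK.isCompact
    have himage : Subtype.val '' {k : ↥C | S (k : WeakDual ℝ E) = (k : WeakDual ℝ E)}
        = {y | y ∈ C ∧ S y = y} := by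
      ext y
      constructor
      · rintro ⟨k, hk, rfl⟩
        exact ⟨k.2, hk⟩
      · rintro ⟨hyC, hySy⟩
        exact ⟨⟨y, hyC⟩, hySy, rfl⟩
    rw [← himage]
    exact hKcomp.image continuous_subtype_val
  have hFcl : IsClosed {y | y ∈ C ∧ S y = y} := hFcomp.isClosed
  have hTF : ∀ y, y ∈ C ∧ S y = y → T y ∈ C ∧ S (T y) = T y := by
    rintro y ⟨hyC, hySy⟩
    refine ⟨hTmaps hyC, ?_⟩
    rw [hcomm y hyC, hySy]
  -- the basepoint in F
  have hx₁ : r x₀ ∈ C ∧ S (r x₀) = r x₀ := ⟨hrC x₀ hx₀, hrfix x₀ hx₀⟩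
  -- Step 4: Browder-type approximants for T inside F
  have happrox : ∀ t : ℝ, 0 ≤ t → t < 1 → ∃ y, (y ∈ C ∧ S y = y) ∧
      r ((1 - t) • (r x₀) + t • T y) = y := by
    intro t h0 h1
    have hmapF : Set.MapsTo (fun y => r ((1 - t) • (r x₀) + t • T y))
        {y | y ∈ C ∧ S y = y} {y | y ∈ C ∧ S y = y} := by
      intro y hy
      have hwC : ((1 - t) • (r x₀) + t • T y) ∈ C :=
        hconv hx₁.1 (hTmaps hy.1) (by linarith) h0 (by ring)
      exact ⟨hrC _ hwC, hrfix _ hwC⟩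
    have hcontr : ∀ a ∈ {y | y ∈ C ∧ S y = y}, ∀ b ∈ {y | y ∈ C ∧ S y = y},
        ‖WeakDual.toStrongDual ((fun y => r ((1 - t) • (r x₀) + t • T y)) a
          - (fun y => r ((1 - t) • (r x₀) + t • T y)) b)‖
        ≤ t * ‖WeakDual.toStrongDual (a - b)‖ := by
      intro a ha b hb
      have hwaC : ((1 - t) • (r x₀) + t • T a) ∈ C :=
        hconv hx₁.1 (hTmaps ha.1) (by linarith) h0 (by ring)
      have hwbC : ((1 - t) • (r x₀) + t • T b) ∈ C :=
        hconv hx₁.1 (hTmaps hb.1) (by linarith) h0 (by ring)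
      have hr1 := hrne _ hwaC _ hwbC
      have hsub : ((1 - t) • (r x₀) + t • T a) - ((1 - t) • (r x₀) + t • T b)
          = t • (T a - T b) := by
        module
      rw [hsub, map_smul, norm_smul, Real.norm_eq_abs, abs_of_nonneg h0] at hr1
      have hTab := hTne a ha.1 b hb.1
      calc ‖WeakDual.toStrongDual ((fun y => r ((1 - t) • (r x₀) + t • T y)) a
            - (fun y => r ((1 - t) • (r x₀) + t • T y)) b)‖
          ≤ t * ‖WeakDual.toStrongDual (T a - T b)‖ := hr1
        _ ≤ t * ‖WeakDual.toStrongDual (a - b)‖ :=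
            mul_le_mul_of_nonneg_left hTab h0
    obtain ⟨y, hyF, hyeq⟩ := stmt17_banach_on {y | y ∈ C ∧ S y = y} hFcl
      (fun y => r ((1 - t) • (r x₀) + t • T y)) hmapF t h0 h1 hcontr (r x₀) hx₁
    exact ⟨y, hyF, hyeq⟩
  choose! y hyF hyeq using happrox
  -- displacement of the approximants under T
  have hydisp : ∀ t : ℝ, 0 ≤ t → t < 1 →
      ‖WeakDual.toStrongDual (T (y t) - y t)‖ ≤ (1 - t) * D := by
    intro t h0 h1
    have hyFt := hyF t h0 h1
    have hTyF : T (y t) ∈ C ∧ S (T (y t)) = T (y t) := hTF _ hyFt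
    have hrTy : r (T (y t)) = T (y t) := hrid _ hTyF.1 hTyF.2
    have hwC : ((1 - t) • (r x₀) + t • T (y t)) ∈ C :=
      hconv hx₁.1 hTyF.1 (by linarith) h0 (by ring)
    obtain ⟨w, hw⟩ : ∃ w, w = T (y t) := ⟨_, rfl⟩
    have hyeq' := hyeq t h0 h1
    rw [← hw] at hrTy hwC hyeq' ⊢
    have hwC2 : w ∈ C := by rw [hw]; exact hTyF.1
    have hkey : ‖WeakDual.toStrongDual (y t - w)‖
        ≤ ‖WeakDual.toStrongDual (((1 - t) • (r x₀) + t • w) - w)‖ := by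
      have h1' : y t - w = r ((1 - t) • (r x₀) + t • w) - r w := by
        rw [hyeq', hrTy]
      rw [h1']
      exact hrne _ hwC _ hwC2
    have hsub : ((1 - t) • (r x₀) + t • w) - w
        = (1 - t) • ((r x₀) - w) := by
      module
    rw [hsub, map_smul, norm_smul, Real.norm_eq_abs,
      abs_of_nonneg (by linarith : (0:ℝ) ≤ 1 - t)] at hkey
    have hbd := hD _ hx₁.1 _ hwC2
    have hrev : ‖WeakDual.toStrongDual (w - y t)‖
        = ‖WeakDual.toStrongDual (y t - w)‖ := by
      rw [map_sub, map_sub, norm_sub_rev]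
    rw [hrev]
    calc ‖WeakDual.toStrongDual (y t - w)‖
        ≤ (1 - t) * ‖WeakDual.toStrongDual ((r x₀) - w)‖ := hkey
      _ ≤ (1 - t) * D := mul_le_mul_of_nonneg_left hbd (by linarith)
  -- Step 5: pass to the limit along the ultrafilter
  obtain ⟨z, hzF, hzT⟩ := hulim {y | y ∈ C ∧ S y = y} hFcomp
    (fun n : ℕ => y (1 - 1/((n:ℝ)+1)))
    (fun n => hyF _ (hseq0 n) (hseq1 n))
  have hzC : z ∈ C := hzF.1
  have hT2 : Tendsto (fun n : ℕ => T (y (1 - 1/((n:ℝ)+1)))) (U : Filter ℕ)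
      (𝓝 (T z)) := by
    have hcw : ContinuousWithinAt T C z := hTc z hzC
    apply hcw.tendsto.comp
    rw [nhdsWithin, tendsto_inf]
    refine ⟨hzT, ?_⟩
    rw [tendsto_principal]
    filter_upwards using fun n => (hyF _ (hseq0 n) (hseq1 n)).1
  have hT3 : Tendsto (fun n : ℕ => T (y (1 - 1/((n:ℝ)+1)))) (U : Filter ℕ) (𝓝 z) := by
    apply stmt17_tendsto_of_close U hU (fun n : ℕ => y (1 - 1/((n:ℝ)+1))) _ _ hzT
      (fun n => (1/((n:ℝ)+1)) * D) hbto
    intro n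
    have := hydisp _ (hseq0 n) (hseq1 n)
    rw [hseqc n] at this
    exact this
  have hTz : T z = z := tendsto_nhds_unique hT2 hT3
  exact ⟨z, hzC, hzF.2, hTz⟩
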